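/- Let f : (0,∞) → (0,∞) be continuous with F(x) = ∫_x^1 du/f(u) satisfying F(x) → +∞ as x → 0⁺, so that F is strictly decreasing with inverse F⁻¹ and F⁻¹(t) → 0 as t → ∞. If f∘F⁻¹ ∈ RV_∞(-1), then F⁻¹ ∈ RV_∞(0), i.e., F⁻¹ is slowly varying at infinity. -/

import Mathlib

open Filter Real Set Topology MeasureTheory

noncomputable section

/-- A function `f : (0,∞) → (0,∞)` is regularly varying at `0` with index `β` if
`f(λx)/f(x) → λ^β` as `x → 0⁺` for every `λ > 0`. -/
def RVat0 (f : ℝ → ℝ) (β : ℝ) : Prop :=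
  ∀ lam : ℝ, 0 < lam →
    Tendsto (fun x => f (lam * x) / f x) (nhdsWithin 0 (Set.Ioi 0)) (nhds (lam ^ β))

/-- A function `h : (0,∞) → (0,∞)` is regularly varying at `∞` with index `α` if
`h(λt)/h(t) → λ^α` as `t → ∞` for every `λ > 0`. -/
def RVatInf (h : ℝ → ℝ) (α : ℝ) : Prop :=
  ∀ lam : ℝ, 0 < lam →
    Tendsto (fun t => h (lam * t) / h t) atTop (nhds (lam ^ α))

/-- A continuous solution of the perturbed ODE `x'(t) = -f(x(t)) + g(t)`, `t > 0`,
with initial condition `x(0) = ξ`. -/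
def IsSol (f g : ℝ → ℝ) (ξ : ℝ) (x : ℝ → ℝ) : Prop :=
  ContinuousOn x (Set.Ici 0) ∧ x 0 = ξ ∧
    ∀ t : ℝ, 0 < t → HasDerivAt x (-f (x t) + g t) t

/-- Remark after Theorem 2.3: if `f : (0,∞) → (0,∞)` is continuous,
`F(x) = ∫_x^1 du/f(u)` tends to `+∞` as `x → 0⁺` (so that `F` is strictly decreasing
with inverse `F⁻¹` and `F⁻¹(t) → 0` as `t → ∞`), and `f∘F⁻¹ ∈ RV_∞(-1)`, then
`F⁻¹` is slowly varying at infinity. -/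
private theorem stmt_9_aux (f F Finv : ℝ → ℝ)
    (hf_pos : ∀ y : ℝ, 0 < y → 0 < f y)
    (hf_cont : ContinuousOn f (Set.Ioi 0))
    (hF : ∀ y : ℝ, 0 < y → F y = ∫ u in y..(1:ℝ), 1 / f u)
    (hF_top : Tendsto F (nhdsWithin 0 (Set.Ioi 0)) atTop)
    (hF_anti : StrictAntiOn F (Set.Ioi 0))
    (hFinv : ∀ t : ℝ, 0 ≤ t → 0 < Finv t ∧ F (Finv t) = t)
    (hFinv_to0 : Tendsto Finv atTop (nhds 0))
    (hfFinvRV : ∀ lam : ℝ, 0 < lam →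
      Tendsto (fun t => f (Finv (lam * t)) / f (Finv t)) atTop (nhds (lam ^ (-1:ℝ)))) :
    ∀ lam : ℝ, 0 < lam →
      Tendsto (fun t => Finv (lam * t) / Finv t) atTop (nhds (lam ^ (0:ℝ))) := by
  -- basic facts
  have hFpos : ∀ t : ℝ, 0 ≤ t → 0 < Finv t := fun t ht => (hFinv t ht).1
  have hFeq : ∀ t : ℝ, 0 ≤ t → F (Finv t) = t := fun t ht => (hFinv t ht).2
  -- Finv is strictly antitone on [0,∞)
  have hFinv_anti : ∀ s t : ℝ, 0 ≤ s → s < t → Finv t < Finv s := by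
    intro s t hs hst
    have ht : (0:ℝ) ≤ t := le_trans hs hst.le
    rcases lt_trichotomy (Finv t) (Finv s) with h | h | h
    · exact h
    · exfalso; rw [← hFeq s hs, ← hFeq t ht, h] at hst; exact lt_irrefl _ hst
    · exfalso
      have := hF_anti (hFpos s hs) (hFpos t ht) h
      rw [hFeq s hs, hFeq t ht] at this
      exact absurd hst (not_lt.2 this.le)
  -- surjectivity onto (0, Finv 0)
  have hsurj : ∀ y : ℝ, 0 < y → y < Finv 0 → (0 < F y ∧ Finv (F y) = y) := by
    intro y hy hyl
    have hFy : 0 < F y := by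
      have := hF_anti hy (hFpos 0 le_rfl) hyl
      rwa [hFeq 0 le_rfl] at this
    refine ⟨hFy, ?_⟩
    have h1 : F (Finv (F y)) = F y := hFeq (F y) hFy.le
    exact hF_anti.injOn (hFpos (F y) hFy.le) hy h1
  -- continuity of Finv at positive points
  have hFinv_cont : ∀ t : ℝ, 0 < t → ContinuousAt Finv t := by
    intro t ht
    have hneg : StrictMonoOn (fun s => -Finv s) (Ioi 0) := by
      intro a ha b hb hab
      exact neg_lt_neg (hFinv_anti a b (le_of_lt ha) hab)
    have hs : Ioi (0:ℝ) ∈ 𝓝 t := Ioi_mem_nhds ht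
    have himg : (fun s => -Finv s) '' (Ioi 0) ∈ 𝓝 (-Finv t) := by
      have hsub2 : Ioo (-(Finv 0)) 0 ⊆ (fun s => -Finv s) '' (Ioi 0) := by
        rintro z ⟨hz1, hz2⟩
        have hy1 : 0 < -z := neg_pos.2 hz2
        have hy2 : -z < Finv 0 := by linarith
        obtain ⟨hFy, hFy2⟩ := hsurj (-z) hy1 hy2
        exact ⟨F (-z), hFy, by simp only []; rw [hFy2]; ring⟩
      have hmem : -Finv t ∈ Ioo (-(Finv 0)) 0 :=
        ⟨neg_lt_neg (hFinv_anti 0 t le_rfl ht), neg_neg_iff_pos.2 (hFpos t ht.le)⟩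
      exact mem_of_superset (isOpen_Ioo.mem_nhds hmem) hsub2
    have h1 := hneg.continuousAt_of_image_mem_nhds hs himg
    have h2 := h1.neg
    convert h2 using 1
    funext s
    simp
  -- continuity of h = f ∘ Finv at positive points
  have h_cont : ∀ t : ℝ, 0 < t → ContinuousAt (fun s => f (Finv s)) t := by
    intro t ht
    exact (hf_cont.continuousAt (Ioi_mem_nhds (hFpos t ht.le))).comp (hFinv_cont t ht)
  have h_pos : ∀ t : ℝ, 0 ≤ t → 0 < f (Finv t) := fun t ht => hf_pos _ (hFpos t ht)
  -- derivative of F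
  have hFd : ∀ x : ℝ, 0 < x → HasDerivAt F (-(f x)⁻¹) x := by
    intro x hx
    have hgcont : ContinuousOn (fun u => (f u)⁻¹) (Ioi 0) :=
      hf_cont.inv₀ (fun y hy => (hf_pos y hy).ne')
    have hint : IntervalIntegrable (fun u => (f u)⁻¹) volume 1 x := by
      apply ContinuousOn.intervalIntegrable
      apply hgcont.mono
      intro u hu
      have hmin : (0:ℝ) < min 1 x := lt_min one_pos hx
      exact lt_of_lt_of_le hmin hu.1
    have hmeas : StronglyMeasurableAtFilter (fun u => (f u)⁻¹) (𝓝 x) volume :=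
      hgcont.stronglyMeasurableAtFilter isOpen_Ioi x hx
    have hca : ContinuousAt (fun u => (f u)⁻¹) x := hgcont.continuousAt (Ioi_mem_nhds hx)
    have hD : HasDerivAt (fun y => ∫ u in (1:ℝ)..y, (f u)⁻¹) ((f x)⁻¹) x :=
      intervalIntegral.integral_hasDerivAt_right hint hmeas hca
    have hD2 : HasDerivAt (fun y => -∫ u in (1:ℝ)..y, (f u)⁻¹) (-(f x)⁻¹) x := hD.neg
    apply hD2.congr_of_eventuallyEq
    filter_upwards [Ioi_mem_nhds hx] with y hy
    rw [hF y hy, intervalIntegral.integral_symm]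
    simp [one_div]
  -- derivative of Finv
  have hFinvd : ∀ t : ℝ, 0 < t → HasDerivAt Finv (-(f (Finv t))) t := by
    intro t ht
    have h1 : HasDerivAt F (-(f (Finv t))⁻¹) (Finv t) := hFd _ (hFpos t ht.le)
    have h2 : (-(f (Finv t))⁻¹) ≠ 0 := by
      simp [ne_eq, inv_eq_zero, (h_pos t ht.le).ne']
    have h3 : ∀ᶠ y in 𝓝 t, F (Finv y) = y := by
      filter_upwards [Ioi_mem_nhds ht] with y hy
      exact hFeq y (le_of_lt hy)
    have h4 := HasDerivAt.of_local_left_inverse (hFinv_cont t ht) h1 h2 h3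
    rw [inv_neg, inv_inv] at h4
    exact h4
  -- FTC for Finv
  have hsub : ∀ a b : ℝ, 0 < a → a ≤ b →
      Finv a - Finv b = ∫ s in a..b, f (Finv s) := by
    intro a b ha hab
    have hmem : ∀ x ∈ uIcc a b, HasDerivAt Finv (-(f (Finv x))) x := by
      intro x hx
      rw [uIcc_of_le hab] at hx
      exact hFinvd x (lt_of_lt_of_le ha hx.1)
    have hint : IntervalIntegrable (fun s => -(f (Finv s))) volume a b := by
      apply ContinuousOn.intervalIntegrable
      intro x hx
      rw [uIcc_of_le hab] at hx
      exact ((h_cont x (lt_of_lt_of_le ha hx.1)).neg).continuousWithinAt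
    have hFTC := intervalIntegral.integral_eq_sub_of_hasDerivAt hmem hint
    rw [intervalIntegral.integral_neg] at hFTC
    linarith
  -- the key Fatou step
  have htop : Tendsto (fun t => Finv t / (t * f (Finv t))) atTop atTop := by
    rw [tendsto_atTop]
    intro C
    set M : ℝ := Real.exp (|C| + 2) with hM
    have hM1 : (1:ℝ) < M := by
      rw [hM]
      exact Real.one_lt_exp_iff.2 (by positivity)
    have hlogM : Real.log M = |C| + 2 := Real.log_exp _
    -- the finite-interval bound
    have hIle : ∀ t : ℝ, 0 < t → (∫ u in (1:ℝ)..M, f (Finv (t * u)) / f (Finv t))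
        ≤ Finv t / (t * f (Finv t)) := by
      intro t ht
      have h1 : (∫ u in (1:ℝ)..M, f (Finv (t * u)))
          = t⁻¹ • ∫ s in (t*1)..(t*M), f (Finv s) :=
        intervalIntegral.integral_comp_mul_left (fun s => f (Finv s)) ht.ne'
      rw [smul_eq_mul, mul_one] at h1
      have htM : t ≤ t * M := le_mul_of_one_le_right ht.le hM1.le
      have h2 : (∫ s in t..(t*M), f (Finv s)) = Finv t - Finv (t*M) :=
        (hsub t (t*M) ht htM).symm
      rw [intervalIntegral.integral_div, h1, h2]
      have hBpos : 0 < Finv (t*M) := hFpos _ (le_trans ht.le htM)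
      have hP : 0 < f (Finv t) := h_pos t ht.le
      have heq : t⁻¹ * (Finv t - Finv (t*M)) / f (Finv t)
          = (Finv t - Finv (t*M)) / (t * f (Finv t)) := by
        field_simp
      rw [heq]
      have hd : 0 < t * f (Finv t) := mul_pos ht hP
      exact (div_le_div_iff_of_pos_right hd).2 (by linarith)
    -- eventual lower bound via Fatou
    have hIev : ∀ᶠ t in atTop, |C| + 1 ≤ ∫ u in (1:ℝ)..M, f (Finv (t*u)) / f (Finv t) := by
      by_contra hcon
      rw [Filter.not_eventually] at hcon
      have hfreq : ∀ b : ℝ, ∃ t ≥ b,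
          (∫ u in (1:ℝ)..M, f (Finv (t*u)) / f (Finv t)) < |C| + 1 :=
        frequently_atTop.1 (hcon.mono (fun t ht => lt_of_not_ge ht))
      choose T hT1 hT2 using hfreq
      set tn : ℕ → ℝ := fun n => T ((n:ℝ) + 1) with htndef
      have htnpos : ∀ n, 0 < tn n := fun n => lt_of_lt_of_le (by positivity) (hT1 _)
      have htninf : Tendsto tn atTop atTop :=
        tendsto_atTop_mono (fun n => hT1 ((n:ℝ)+1))
          (tendsto_atTop_add_const_right _ 1 tendsto_natCast_atTop_atTop)
      set μ : Measure ℝ := volume.restrict (Ioc (1:ℝ) M) with hμ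
      set Φ : ℕ → ℝ → ENNReal :=
        fun n u => ENNReal.ofReal (f (Finv (tn n * u)) / f (Finv (tn n))) with hΦ
      have hgcont : ∀ n, ContinuousOn
          (fun u => f (Finv (tn n * u)) / f (Finv (tn n))) (Icc 1 M) := by
        intro n u hu
        have hu0 : 0 < tn n * u :=
          mul_pos (htnpos n) (lt_of_lt_of_le one_pos hu.1)
        exact (((h_cont _ hu0).comp
          (continuousAt_const.mul continuousAt_id)).div_const _).continuousWithinAt
      have hgnn : ∀ n, ∀ u ∈ Ioc (1:ℝ) M,
          0 ≤ f (Finv (tn n * u)) / f (Finv (tn n)) := by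
        intro n u hu
        have hu0 : 0 < tn n * u := mul_pos (htnpos n) (lt_trans one_pos hu.1)
        exact le_of_lt (div_pos (h_pos _ hu0.le) (h_pos _ (htnpos n).le))
      have hmeasn : ∀ n, AEMeasurable (Φ n) μ := by
        intro n
        exact (ENNReal.continuous_ofReal.comp_continuousOn
          ((hgcont n).mono Ioc_subset_Icc_self)).aemeasurable measurableSet_Ioc
      have hfatou := lintegral_liminf_le' (u := atTop) hmeasn
      -- pointwise liminf
      have hlim : ∀ u ∈ Ioc (1:ℝ) M,
          liminf (fun n => Φ n u) atTop = ENNReal.ofReal u⁻¹ := by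
        intro u hu
        have hu0 : 0 < u := lt_trans one_pos hu.1
        have h1 := (hfFinvRV u hu0).comp htninf
        simp only [Function.comp_def] at h1
        have h2 : Tendsto (fun n => f (Finv (tn n * u)) / f (Finv (tn n)))
            atTop (𝓝 (u ^ (-1:ℝ))) := by
          convert h1 using 3 with n
          rw [mul_comm]
        rw [Real.rpow_neg_one] at h2
        exact ((ENNReal.continuous_ofReal.tendsto _).comp h2).liminf_eq
      -- compute LHS of Fatou
      have hLHS : (∫⁻ u, liminf (fun n => Φ n u) atTop ∂μ)
          = ENNReal.ofReal (|C| + 2) := by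
        rw [lintegral_congr_ae ((ae_restrict_iff' measurableSet_Ioc).2
          (ae_of_all _ hlim))]
        have hint_inv : IntegrableOn (fun u : ℝ => u⁻¹) (Ioc 1 M) := by
          apply (ContinuousOn.intervalIntegrable ?_).1
          intro u hu
          rw [uIcc_of_le hM1.le] at hu
          exact (continuousAt_inv₀ (ne_of_gt (lt_of_lt_of_le one_pos hu.1))).continuousWithinAt
        have hnn : (0:ℝ → ℝ) ≤ᶠ[ae μ] (fun u : ℝ => u⁻¹) := by
          rw [hμ]
          apply (ae_restrict_iff' measurableSet_Ioc).2
          apply ae_of_all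
          intro u hu
          simp only [Pi.zero_apply]
          exact inv_nonneg.2 (le_trans zero_le_one hu.1.le)
        rw [← ofReal_integral_eq_lintegral_ofReal hint_inv hnn]
        congr 1
        rw [← intervalIntegral.integral_of_le hM1.le, integral_inv, div_one, hlogM]
        rw [uIcc_of_le hM1.le]
        rintro ⟨h0, -⟩
        linarith
      -- RHS terms
      have hRHSn : ∀ n, (∫⁻ u, Φ n u ∂μ)
          = ENNReal.ofReal (∫ u in (1:ℝ)..M, f (Finv (tn n * u)) / f (Finv (tn n))) := by
        intro n
        have hint_n : IntegrableOn
            (fun u => f (Finv (tn n * u)) / f (Finv (tn n))) (Ioc 1 M) := by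
          apply (ContinuousOn.intervalIntegrable ?_).1
          rw [uIcc_of_le hM1.le]
          exact hgcont n
        have hnn : (0:ℝ → ℝ) ≤ᶠ[ae μ]
            (fun u => f (Finv (tn n * u)) / f (Finv (tn n))) := by
          rw [hμ]
          apply (ae_restrict_iff' measurableSet_Ioc).2
          apply ae_of_all
          intro u hu
          simpa using hgnn n u hu
        rw [intervalIntegral.integral_of_le hM1.le,
          ← ofReal_integral_eq_lintegral_ofReal hint_n hnn]
      have hRHSle : liminf (fun n => ∫⁻ u, Φ n u ∂μ) atTop
          ≤ ENNReal.ofReal (|C| + 1) := by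
        have hle : ∀ n, (∫⁻ u, Φ n u ∂μ) ≤ ENNReal.ofReal (|C| + 1) := by
          intro n
          rw [hRHSn n]
          exact ENNReal.ofReal_le_ofReal (hT2 ((n:ℝ)+1)).le
        calc liminf (fun n => ∫⁻ u, Φ n u ∂μ) atTop
            ≤ liminf (fun _ : ℕ => ENNReal.ofReal (|C| + 1)) atTop :=
              liminf_le_liminf (Eventually.of_forall hle)
          _ = ENNReal.ofReal (|C| + 1) := liminf_const _
      rw [hLHS] at hfatou
      have hcontra := le_trans hfatou hRHSle
      rw [ENNReal.ofReal_le_ofReal_iff (by positivity)] at hcontra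
      linarith
    filter_upwards [hIev, eventually_gt_atTop 0] with t h1 h2
    calc C ≤ |C| + 1 := by cases abs_cases C <;> linarith
      _ ≤ _ := le_trans h1 (hIle t h2)
  have hphi : Tendsto (fun t => t * f (Finv t) / Finv t) atTop (𝓝 0) := by
    have := htop.inv_tendsto_atTop
    have heq : (fun t => Finv t / (t * f (Finv t)))⁻¹
        = fun t => t * f (Finv t) / Finv t := by
      funext t; simp [Pi.inv_apply, inv_div]
    rwa [heq] at this
  -- main lemma for lam ≥ 1
  have hmain : ∀ lam : ℝ, 1 ≤ lam →
      Tendsto (fun t => Finv (lam * t) / Finv t) atTop (𝓝 1) := by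
    intro lam hlam
    have hlam0 : 0 < lam := lt_of_lt_of_le one_pos hlam
    have hlog0 : Tendsto (fun t => Real.log (Finv (lam * t)) - Real.log (Finv t))
        atTop (𝓝 0) := by
      rw [NormedAddCommGroup.tendsto_nhds_zero]
      intro ε hε
      have hloglam : 0 ≤ Real.log lam := Real.log_nonneg hlam
      set ε' : ℝ := ε / (2 * (Real.log lam + 1)) with hε'def
      have hε'pos : 0 < ε' := by
        rw [hε'def]; apply div_pos hε; linarith
      have hev := hphi.eventually_lt_const hε'pos
      rcases (eventually_atTop.1 hev) with ⟨T, hT⟩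
      filter_upwards [eventually_ge_atTop (max T 1)] with t ht
      have ht1 : (1:ℝ) ≤ t := le_trans (le_max_right _ _) ht
      have htT : T ≤ t := le_trans (le_max_left _ _) ht
      have ht0 : 0 < t := lt_of_lt_of_le one_pos ht1
      have htl : t ≤ lam * t := le_mul_of_one_le_left ht0.le hlam
      -- FTC for log ∘ Finv
      have hderiv : ∀ x ∈ uIcc t (lam*t),
          HasDerivAt (fun s => Real.log (Finv s)) (-(f (Finv x)) / Finv x) x := by
        intro x hx
        rw [uIcc_of_le htl] at hx
        have hx0 : 0 < x := lt_of_lt_of_le ht0 hx.1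
        have := (hFinvd x hx0).log (hFpos x hx0.le).ne'
        simpa using this
      have hcontFinv : ∀ x ∈ uIcc t (lam*t), ContinuousWithinAt
          (fun x => -(f (Finv x)) / Finv x) (uIcc t (lam*t)) x := by
        intro x hx
        rw [uIcc_of_le htl] at hx
        have hx0 : 0 < x := lt_of_lt_of_le ht0 hx.1
        exact (((h_cont x hx0).neg).div (hFinv_cont x hx0)
          (hFpos x hx0.le).ne').continuousWithinAt
      have hint0 : IntervalIntegrable (fun x => -(f (Finv x)) / Finv x)
          volume t (lam*t) := ContinuousOn.intervalIntegrable hcontFinv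
      have hFTC := intervalIntegral.integral_eq_sub_of_hasDerivAt hderiv hint0
      -- the integral of the positive function
      have hJeq : (∫ x in t..(lam*t), -(f (Finv x)) / Finv x)
          = -(∫ x in t..(lam*t), f (Finv x) / Finv x) := by
        rw [← intervalIntegral.integral_neg]
        congr 1
        funext x
        rw [neg_div]
      set J : ℝ := ∫ x in t..(lam*t), f (Finv x) / Finv x with hJdef
      have hint1 : IntervalIntegrable (fun x => f (Finv x) / Finv x)
          volume t (lam*t) := by
        apply ContinuousOn.intervalIntegrable
        intro x hx
        rw [uIcc_of_le htl] at hx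
        have hx0 : 0 < x := lt_of_lt_of_le ht0 hx.1
        exact ((h_cont x hx0).div (hFinv_cont x hx0)
          (hFpos x hx0.le).ne').continuousWithinAt
      have hint2 : IntervalIntegrable (fun x : ℝ => ε' * x⁻¹)
          volume t (lam*t) := by
        apply ContinuousOn.intervalIntegrable
        intro x hx
        rw [uIcc_of_le htl] at hx
        have hx0 : 0 < x := lt_of_lt_of_le ht0 hx.1
        exact (continuousAt_const.mul (continuousAt_inv₀ hx0.ne')).continuousWithinAt
      have hJnn : 0 ≤ J := by
        rw [hJdef]
        apply intervalIntegral.integral_nonneg htl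
        intro x hx
        have hx0 : 0 < x := lt_of_lt_of_le ht0 hx.1
        exact (div_pos (h_pos x hx0.le) (hFpos x hx0.le)).le
      have hJle : J ≤ ε' * Real.log lam := by
        have hmono : J ≤ ∫ x in t..(lam*t), ε' * x⁻¹ := by
          rw [hJdef]
          apply intervalIntegral.integral_mono_on htl hint1 hint2
          intro x hx
          have hx0 : 0 < x := lt_of_lt_of_le ht0 hx.1
          have hφ : x * f (Finv x) / Finv x < ε' := hT x (le_trans htT hx.1)
          have hxne : x ≠ 0 := hx0.ne'
          have hbne : Finv x ≠ 0 := (hFpos x hx0.le).ne'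
          have heq2 : f (Finv x) / Finv x = (x * f (Finv x) / Finv x) * x⁻¹ := by
            field_simp
          rw [heq2]
          exact mul_le_mul_of_nonneg_right hφ.le (inv_nonneg.2 hx0.le)
        have hcomp : (∫ x in t..(lam*t), ε' * x⁻¹) = ε' * Real.log lam := by
          rw [intervalIntegral.integral_const_mul, integral_inv ?_,
            mul_div_cancel_right₀ _ ht0.ne']
          rw [uIcc_of_le htl]
          rintro ⟨h0, -⟩
          linarith
        linarith
      -- conclude the bound
      have hεbound : ε' * Real.log lam < ε := by
        have h1 : ε' * (Real.log lam + 1) = ε / 2 := by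
          rw [hε'def]
          field_simp
        nlinarith
      rw [Real.norm_eq_abs]
      have hD : Real.log (Finv (lam * t)) - Real.log (Finv t) = -J := by
        rw [← hFTC, hJeq]
      rw [hD, abs_neg, abs_of_nonneg hJnn]
      linarith
    have hexp := (Real.continuous_exp.tendsto 0).comp hlog0
    rw [Real.exp_zero] at hexp
    apply hexp.congr'
    filter_upwards [eventually_gt_atTop 0] with t ht
    have h1 : 0 < Finv (lam * t) := hFpos _ (mul_pos hlam0 ht).le
    have h2 : 0 < Finv t := hFpos _ ht.le
    simp only [Function.comp_def]
    rw [Real.exp_sub, Real.exp_log h1, Real.exp_log h2]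
  -- conclude
  intro lam hlam
  rw [Real.rpow_zero]
  rcases le_or_gt 1 lam with h1 | h1
  · exact hmain lam h1
  · have hinv1 : 1 ≤ lam⁻¹ := one_le_inv_iff₀.2 ⟨hlam, h1.le⟩
    have hmul : Tendsto (fun t : ℝ => lam * t) atTop atTop :=
      Tendsto.const_mul_atTop hlam tendsto_id
    have h2 := (hmain lam⁻¹ hinv1).comp hmul
    have h3 : Tendsto (fun t => Finv t / Finv (lam * t)) atTop (𝓝 1) := by
      have heq : (fun t => Finv (lam⁻¹ * (lam * t)) / Finv (lam * t))
          = fun t => Finv t / Finv (lam * t) := by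
        funext t; rw [inv_mul_cancel_left₀ hlam.ne']
      simp only [Function.comp_def] at h2
      rwa [heq] at h2
    have h4 := h3.inv₀ one_ne_zero
    simp only [inv_div, inv_one] at h4
    exact h4

theorem stmt_9 (f F Finv : ℝ → ℝ)
    (hf_pos : ∀ y : ℝ, 0 < y → 0 < f y)
    (hf_cont : ContinuousOn f (Set.Ioi 0))
    (hF : ∀ y : ℝ, 0 < y → F y = ∫ u in y..(1:ℝ), 1 / f u)
    (hF_top : Tendsto F (nhdsWithin 0 (Set.Ioi 0)) atTop)
    (hF_anti : StrictAntiOn F (Set.Ioi 0))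
    (hFinv : ∀ t : ℝ, 0 ≤ t → 0 < Finv t ∧ F (Finv t) = t)
    (hFinv_to0 : Tendsto Finv atTop (nhds 0))
    (hfFinvRV : RVatInf (fun t => f (Finv t)) (-1)) :
    RVatInf Finv 0 :=
  stmt_9_aux f F Finv hf_pos hf_cont hF hF_top hF_anti hFinv hFinv_to0 hfFinvRV
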